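/- Let f be a non-negative submodular function on a finite set V with partition matroid constraints given by a partition B_1,…,B_k of V and integer thresholds d_1,…,d_k (1 ≤ d_i ≤ |B_i|), let d = Σ_i d_i, d̄ = min_i d_i, and let OPT be a feasible set maximizing f. Suppose that for every feasible X with |X| < d̄ there exists w ∈ V∖X with f(X ∪ {w}) ≥ f(X). Then there exists a feasible set Z ⊆ V with |Z| ≤ d̄ such that f(Z) ≥ (1 − e^{−d̄/d}) · ( f(OPT) − (d̄ − 1) · ε_{d + d̄} ), where ε is the monotonicity approximation term of f. -/

import Mathlib

lemma stmt5_marg {α : Type*} [DecidableEq α] (V : Finset α) (f : Finset α → ℝ)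
    (hsub : ∀ X Y : Finset α, X ⊆ Y → Y ⊆ V → ∀ v ∈ V, v ∉ Y →
      f (insert v X) - f X ≥ f (insert v Y) - f Y) :
    ∀ S : Finset α, S ⊆ V → ∀ Z : Finset α, Z ⊆ V →
      f (Z ∪ S) ≤ f Z + ∑ w ∈ S \ Z, (f (insert w Z) - f Z) := by
  intro S
  induction S using Finset.induction_on with
  | empty => intro _ Z _; simp
  | insert _ _ ha =>
    rename_i a S' IH
    intro hS Z hZ
    have hS' : S' ⊆ V := fun x hx => hS (Finset.mem_insert_of_mem hx)
    have haV : a ∈ V := hS (Finset.mem_insert_self a S')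
    by_cases haZ : a ∈ Z
    · have h1 : Z ∪ insert a S' = Z ∪ S' := by
        rw [Finset.union_insert, Finset.insert_eq_self.mpr (Finset.mem_union_left _ haZ)]
      have h2 : insert a S' \ Z = S' \ Z := Finset.insert_sdiff_of_mem _ haZ
      rw [h1, h2]; exact IH hS' Z hZ
    · have haY : a ∉ Z ∪ S' := by
        simp only [Finset.mem_union]; push_neg; exact ⟨haZ, ha⟩
      have hYV : Z ∪ S' ⊆ V := Finset.union_subset hZ hS'
      have key := hsub Z (Z ∪ S') Finset.subset_union_left hYV a haV haY
      have h1 : Z ∪ insert a S' = insert a (Z ∪ S') := Finset.union_insert _ _ _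
      have h2 : insert a S' \ Z = insert a (S' \ Z) :=
        Finset.insert_sdiff_of_notMem _ haZ
      have h3 : a ∉ S' \ Z := fun h => ha (Finset.mem_sdiff.mp h).1
      rw [h1, h2, Finset.sum_insert h3]
      have := IH hS' Z hZ
      linarith

lemma stmt5_rem {α : Type*} [DecidableEq α] (V : Finset α) (f : Finset α → ℝ)
    (m : ℕ) (E : ℝ) (hE : 0 ≤ E)
    (hub : ∀ X ⊆ V, ∀ v ∈ V, X.card < m → f (X.erase v) - f X ≤ E) :
    ∀ S : Finset α, S ⊆ V → ∀ A : Finset α, A ⊆ V → A.card + S.card < m →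
      f A - S.card * E ≤ f (A ∪ S) := by
  intro S
  induction S using Finset.induction_on with
  | empty => intro _ A _ _; simp
  | insert _ _ ha =>
    rename_i a S' IH
    intro hS A hA hcard
    have hS' : S' ⊆ V := fun x hx => hS (Finset.mem_insert_of_mem hx)
    have haV : a ∈ V := hS (Finset.mem_insert_self a S')
    rw [Finset.card_insert_of_notMem ha] at hcard
    have hcard' : A.card + S'.card < m := by omega
    have IH' := IH hS' A hA hcard'
    have hcast : ((insert a S').card : ℝ) = (S'.card : ℝ) + 1 := by
      rw [Finset.card_insert_of_notMem ha]; push_cast; ring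
    by_cases haA : a ∈ A
    · have h1 : A ∪ insert a S' = A ∪ S' := by
        rw [Finset.union_insert, Finset.insert_eq_self.mpr (Finset.mem_union_left _ haA)]
      rw [h1, hcast]
      nlinarith [Nat.cast_nonneg (α := ℝ) (S'.card)]
    · have haY : a ∉ A ∪ S' := by
        simp only [Finset.mem_union]; push_neg; exact ⟨haA, ha⟩
      have hXV : insert a (A ∪ S') ⊆ V :=
        Finset.insert_subset haV (Finset.union_subset hA hS')
      have hXcard : (insert a (A ∪ S')).card < m := by
        rw [Finset.card_insert_of_notMem haY]
        have := Finset.card_union_le A S'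
        omega
      have key := hub _ hXV a haV hXcard
      rw [Finset.erase_insert haY] at key
      have h1 : A ∪ insert a S' = insert a (A ∪ S') := Finset.union_insert _ _ _
      rw [h1, hcast]
      linarith

/-- Existence of a feasible set `Z` with `|Z| ≤ d̄` and
`f(Z) ≥ (1 − e^{−d̄/d})·(f(OPT) − (d̄−1)·ε_{d+d̄})` for a non-negative submodular `f`
under partition matroid constraints, assuming dummy elements (non-negative marginal gains
always available below size `d̄`). -/
theorem stmt_5 {α : Type*} [DecidableEq α] (V : Finset α) (f : Finset α → ℝ)
    (hf0 : ∀ X ⊆ V, 0 ≤ f X)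
    (hsub : ∀ X Y : Finset α, X ⊆ Y → Y ⊆ V → ∀ v ∈ V, v ∉ Y →
      f (insert v X) - f X ≥ f (insert v Y) - f Y)
    (k : ℕ) (hk : 0 < k) (B : Fin k → Finset α)
    (hdisj : ∀ i j : Fin k, i ≠ j → Disjoint (B i) (B j))
    (hcover : Finset.univ.biUnion B = V)
    (dPart : Fin k → ℕ) (hdPart : ∀ i, 1 ≤ dPart i ∧ dPart i ≤ (B i).card)
    (d : ℕ) (hd : d = ∑ i, dPart i)
    (dbar : ℕ) (hdbar : IsLeast (Set.range dPart) dbar)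
    (ε : ℕ → ℝ) (hε0 : ε 0 = 0)
    (hε : ∀ j : ℕ, 0 < j →
      IsGreatest {r : ℝ | ∃ X ⊆ V, ∃ v ∈ V, X.card < j ∧ r = f (X.erase v) - f X} (ε j))
    (OPT : Finset α) (hOPTsub : OPT ⊆ V) (hOPTfeas : ∀ i, (OPT ∩ B i).card ≤ dPart i)
    (hOPTmax : ∀ Y ⊆ V, (∀ i, (Y ∩ B i).card ≤ dPart i) → f Y ≤ f OPT)
    (hdummy : ∀ X : Finset α, X ⊆ V → (∀ i, (X ∩ B i).card ≤ dPart i) → X.card < dbar →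
      ∃ w ∈ V \ X, f (insert w X) ≥ f X) :
    ∃ Z : Finset α, Z ⊆ V ∧ (∀ i, (Z ∩ B i).card ≤ dPart i) ∧ Z.card ≤ dbar ∧
      f Z ≥ (1 - Real.exp (-((dbar : ℝ) / (d : ℝ)))) *
        (f OPT - ((dbar : ℝ) - 1) * ε (d + dbar)) := by
  classical
  -- basic numeric facts
  have i0 : Fin k := ⟨0, hk⟩
  have hdbar_le : ∀ i, dbar ≤ dPart i := fun i => hdbar.2 ⟨i, rfl⟩
  have hdbar_pos : 1 ≤ dbar := by
    obtain ⟨i, hi⟩ := hdbar.1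
    have := (hdPart i).1; omega
  have hd_ge : dPart i0 ≤ d := by
    rw [hd]
    exact Finset.single_le_sum (fun i _ => Nat.zero_le _) (Finset.mem_univ i0)
  have hdbar_le_d : dbar ≤ d := le_trans (hdbar_le i0) hd_ge
  have hd_pos : 1 ≤ d := le_trans hdbar_pos hdbar_le_d
  have hdR : (1:ℝ) ≤ (d:ℝ) := by exact_mod_cast hd_pos
  have hdR0 : (0:ℝ) < (d:ℝ) := lt_of_lt_of_le one_pos hdR
  have hVcard : d ≤ V.card := by
    rw [← hcover, Finset.card_biUnion (fun i _ j _ hij => hdisj i j hij), hd]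
    exact Finset.sum_le_sum fun i _ => (hdPart i).2
  have hVne : V.Nonempty := Finset.card_pos.mp (lt_of_lt_of_le hd_pos hVcard)
  -- the monotonicity term
  set E := ε (d + dbar) with hEdef
  have hjpos : 0 < d + dbar := by omega
  have hub : ∀ X ⊆ V, ∀ v ∈ V, X.card < d + dbar → f (X.erase v) - f X ≤ E :=
    fun X hX v hv hc => (hε _ hjpos).2 ⟨X, hX, v, hv, hc, rfl⟩
  have hE0 : 0 ≤ E := by
    obtain ⟨v, hv⟩ := hVne
    have h0 : (0:ℝ) ∈ {r : ℝ | ∃ X ⊆ V, ∃ v ∈ V, X.card < d + dbar ∧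
        r = f (X.erase v) - f X} := by
      refine ⟨∅, Finset.empty_subset V, v, hv, ?_, by simp⟩
      simpa using hjpos
    exact (hε _ hjpos).2 h0
  have hOPTcard : OPT.card ≤ d := by
    have hsubB : OPT ⊆ Finset.univ.biUnion (fun i => OPT ∩ B i) := by
      intro x hx
      have hxV : x ∈ V := hOPTsub hx
      rw [← hcover] at hxV
      obtain ⟨i, _, hxB⟩ := Finset.mem_biUnion.mp hxV
      exact Finset.mem_biUnion.mpr ⟨i, Finset.mem_univ i, Finset.mem_inter.mpr ⟨hx, hxB⟩⟩
    calc OPT.card ≤ (Finset.univ.biUnion (fun i => OPT ∩ B i)).card :=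
            Finset.card_le_card hsubB
      _ ≤ ∑ i, (OPT ∩ B i).card := Finset.card_biUnion_le
      _ ≤ ∑ i, dPart i := Finset.sum_le_sum fun i _ => hOPTfeas i
      _ = d := hd.symm
  set O := f OPT - ((dbar:ℝ) - 1) * E with hOdef
  have hexp01 : 0 ≤ 1 - Real.exp (-((dbar : ℝ) / (d : ℝ))) := by
    have : Real.exp (-((dbar : ℝ) / (d : ℝ))) ≤ 1 := by
      apply Real.exp_le_one_iff.mpr
      apply neg_nonpos.mpr
      positivity
    linarith
  by_cases hO : O ≤ 0
  · refine ⟨∅, Finset.empty_subset V, by simp [Nat.one_le_iff_ne_zero.mp ((hdPart _).1)],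
      by simp, ?_⟩
    have h1 : (1 - Real.exp (-((dbar : ℝ) / (d : ℝ)))) * O ≤ 0 :=
      mul_nonpos_of_nonneg_of_nonpos hexp01 hO
    have h2 : 0 ≤ f ∅ := hf0 ∅ (Finset.empty_subset V)
    exact le_trans h1 h2
  push_neg at hO
  -- greedy induction
  have key : ∀ t, t ≤ dbar → ∃ Z : Finset α, Z ⊆ V ∧ Z.card = t ∧
      O - f Z ≤ (1 - 1/(d:ℝ))^t * O := by
    intro t
    induction t with
    | zero =>
      intro _
      refine ⟨∅, Finset.empty_subset V, rfl, ?_⟩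
      have := hf0 ∅ (Finset.empty_subset V)
      simp only [pow_zero, one_mul]
      linarith
    | succ t IH =>
      intro ht
      obtain ⟨Z, hZV, hZc, hZval⟩ := IH (by omega)
      have htlt : t < dbar := ht
      have hZfeas : ∀ i, (Z ∩ B i).card ≤ dPart i := by
        intro i
        calc (Z ∩ B i).card ≤ Z.card := Finset.card_le_card Finset.inter_subset_left
          _ = t := hZc
          _ ≤ dPart i := le_trans (le_of_lt htlt) (hdbar_le i)
      have hne : (V \ Z).Nonempty := by
        rw [Finset.sdiff_nonempty]
        intro hVZ
        have := Finset.card_le_card hVZ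
        omega
      obtain ⟨v, hvmem, hvmax⟩ := Finset.exists_max_image (V \ Z) (fun w => f (insert w Z)) hne
      obtain ⟨hvV, hvZ⟩ := Finset.mem_sdiff.mp hvmem
      set δ := f (insert v Z) - f Z with hδdef
      -- δ is nonnegative thanks to dummy elements
      have hδ0 : 0 ≤ δ := by
        obtain ⟨w, hwmem, hw⟩ := hdummy Z hZV hZfeas (by omega)
        have := hvmax w hwmem
        simp only [hδdef]
        linarith
      -- the greedy gain inequality
      have hgain : O - f Z ≤ (d:ℝ) * δ := by
        -- f(OPT ∪ Z) ≥ O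
        have hrem : f OPT - ((Z \ OPT).card : ℝ) * E ≤ f (OPT ∪ (Z \ OPT)) := by
          apply stmt5_rem V f (d + dbar) E hE0 hub (Z \ OPT)
            (le_trans (Finset.sdiff_subset) hZV) OPT hOPTsub
          have h1 : (Z \ OPT).card ≤ Z.card := Finset.card_le_card Finset.sdiff_subset
          omega
        rw [Finset.union_sdiff_self_eq_union] at hrem
        have hZOcard : ((Z \ OPT).card : ℝ) ≤ (dbar : ℝ) - 1 := by
          have h1 : (Z \ OPT).card ≤ Z.card := Finset.card_le_card Finset.sdiff_subset
          have : (Z \ OPT).card ≤ dbar - 1 := by omega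
          have h2 : ((Z \ OPT).card : ℝ) ≤ ((dbar - 1 : ℕ) : ℝ) := by exact_mod_cast this
          have h3 : ((dbar - 1 : ℕ) : ℝ) = (dbar : ℝ) - 1 := by
            have : 1 ≤ dbar := hdbar_pos
            push_cast [this]; ring
          linarith
        have hOle : O ≤ f (OPT ∪ Z) := by
          have : ((Z \ OPT).card : ℝ) * E ≤ ((dbar:ℝ) - 1) * E :=
            mul_le_mul_of_nonneg_right hZOcard hE0
          simp only [hOdef]
          linarith
        -- f(OPT ∪ Z) ≤ f Z + d * δ
        have hmarg := stmt5_marg V f hsub OPT hOPTsub Z hZV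
        rw [Finset.union_comm] at hmarg
        have hsum : ∑ w ∈ OPT \ Z, (f (insert w Z) - f Z) ≤ ((OPT \ Z).card : ℝ) * δ := by
          have := Finset.sum_le_card_nsmul (OPT \ Z) (fun w => f (insert w Z) - f Z) δ
            (fun w hw => by
              obtain ⟨hwO, hwZ⟩ := Finset.mem_sdiff.mp hw
              have := hvmax w (Finset.mem_sdiff.mpr ⟨hOPTsub hwO, hwZ⟩)
              simp only [hδdef]; linarith)
          simpa [nsmul_eq_mul] using this
        have hcard2 : ((OPT \ Z).card : ℝ) * δ ≤ (d:ℝ) * δ := by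
          apply mul_le_mul_of_nonneg_right _ hδ0
          have : (OPT \ Z).card ≤ d :=
            le_trans (Finset.card_le_card Finset.sdiff_subset) hOPTcard
          exact_mod_cast this
        linarith
      refine ⟨insert v Z, Finset.insert_subset hvV hZV,
        by rw [Finset.card_insert_of_notMem hvZ, hZc], ?_⟩
      have h1d : 0 ≤ 1 - 1/(d:ℝ) := by
        rw [sub_nonneg, div_le_one hdR0]; exact hdR
      have hstep : O - f (insert v Z) ≤ (1 - 1/(d:ℝ)) * (O - f Z) := by
        have hfins : f (insert v Z) = f Z + δ := by simp [hδdef]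
        have hdiv : (O - f Z) / (d:ℝ) ≤ δ := by
          rw [div_le_iff₀ hdR0]
          linarith [hgain]
        rw [hfins]
        have hring : (1 - 1/(d:ℝ)) * (O - f Z) = (O - f Z) - (O - f Z)/(d:ℝ) := by
          field_simp
        linarith [hdiv]
      calc O - f (insert v Z) ≤ (1 - 1/(d:ℝ)) * (O - f Z) := hstep
        _ ≤ (1 - 1/(d:ℝ)) * ((1 - 1/(d:ℝ))^t * O) :=
            mul_le_mul_of_nonneg_left hZval h1d
        _ = (1 - 1/(d:ℝ))^(t+1) * O := by ring
  obtain ⟨Z, hZV, hZc, hZval⟩ := key dbar le_rfl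
  refine ⟨Z, hZV, ?_, le_of_eq hZc, ?_⟩
  · intro i
    calc (Z ∩ B i).card ≤ Z.card := Finset.card_le_card Finset.inter_subset_left
      _ = dbar := hZc
      _ ≤ dPart i := hdbar_le i
  · have hpow : (1 - 1/(d:ℝ))^dbar ≤ Real.exp (-((dbar : ℝ) / (d : ℝ))) := by
      have h1 : 1 - 1/(d:ℝ) ≤ Real.exp (-(1/(d:ℝ))) := by
        have := Real.add_one_le_exp (-(1/(d:ℝ)))
        linarith
      have h1d : 0 ≤ 1 - 1/(d:ℝ) := by
        rw [sub_nonneg, div_le_one hdR0]; exact hdR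
      calc (1 - 1/(d:ℝ))^dbar ≤ (Real.exp (-(1/(d:ℝ))))^dbar :=
            pow_le_pow_left₀ h1d h1 dbar
        _ = Real.exp ((dbar:ℝ) * (-(1/(d:ℝ)))) := (Real.exp_nat_mul _ dbar).symm
        _ = Real.exp (-((dbar : ℝ) / (d : ℝ))) := by ring_nf
    have hfinal : (1 - 1/(d:ℝ))^dbar * O ≤ Real.exp (-((dbar : ℝ) / (d : ℝ))) * O :=
      mul_le_mul_of_nonneg_right hpow (le_of_lt hO)
    simp only [ge_iff_le, hOdef] at *
    nlinarith [hZval, hfinal]
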